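/- For any simple graph G with at least one edge, the largest signless Laplacian eigenvalue satisfies q_1(G) ≤ max over vertices u of positive degree of ( d(u) + (1/d(u)) · Σ_{v : uv ∈ E(G)} d(v) ), i.e., the maximum over vertices of degree plus average degree of neighbors. -/

import Mathlib

open Matrix

/-- The signless Laplacian matrix `Q(G) = D(G) + A(G)` of a simple graph, over `ℝ`. -/
def SimpleGraph.signlessLap {V : Type*} [Fintype V] [DecidableEq V] (G : SimpleGraph V)
    [DecidableRel G.Adj] : Matrix V V ℝ :=
  G.degMatrix ℝ + G.adjMatrix ℝ

/-- Merris-type bound: every signless Laplacian eigenvalue `μ` of a graph with at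
least one edge satisfies `μ ≤ d(u) + (1/d(u)) ∑_{v ~ u} d(v)` for some vertex `u`
of positive degree, i.e. `q₁(G)` is at most the maximum of degree plus average
degree of neighbors. -/
theorem signlessLap_largest_eigenvalue_merris_bound
    {V : Type*} [Fintype V] [DecidableEq V] (G : SimpleGraph V) [DecidableRel G.Adj]
    (he : G.edgeFinset.Nonempty) :
    ∀ μ ∈ spectrum ℝ G.signlessLap, ∃ u : V, 0 < G.degree u ∧
      μ ≤ (G.degree u : ℝ) +
        (1 / (G.degree u : ℝ)) * ∑ v ∈ G.neighborFinset u, (G.degree v : ℝ) := by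
  intro μ hμ
  -- a vertex of positive degree exists
  obtain ⟨e, heF⟩ := he
  have hav : ∃ a : V, 0 < G.degree a := by
    induction e using Sym2.ind with
    | _ a b =>
      rw [SimpleGraph.mem_edgeFinset, SimpleGraph.mem_edgeSet] at heF
      exact ⟨a, G.degree_pos_iff_exists_adj a |>.2 ⟨b, heF⟩⟩
  obtain ⟨a, ha⟩ := hav
  -- the bound is nonnegative for any vertex of positive degree
  have hbd : ∀ u : V, 0 < G.degree u →
      (0 : ℝ) ≤ (G.degree u : ℝ) +
        (1 / (G.degree u : ℝ)) * ∑ v ∈ G.neighborFinset u, (G.degree v : ℝ) := by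
    intro u hu
    have h1 : (0:ℝ) ≤ (G.degree u : ℝ) := Nat.cast_nonneg _
    have h2 : (0:ℝ) ≤ ∑ v ∈ G.neighborFinset u, (G.degree v : ℝ) :=
      Finset.sum_nonneg fun v _ => Nat.cast_nonneg _
    exact add_nonneg h1 (mul_nonneg (by positivity) h2)
  rcases le_or_gt μ 0 with hμ0 | hμ0
  · exact ⟨a, ha, hμ0.trans (hbd a ha)⟩
  -- extract an eigenvector
  rw [spectrum.mem_iff] at hμ
  have hdet : ((algebraMap ℝ (Matrix V V ℝ)) μ - G.signlessLap).det = 0 := by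
    by_contra h
    exact hμ ((Matrix.isUnit_iff_isUnit_det _).2 (isUnit_iff_ne_zero.2 h))
  obtain ⟨x, hx0, hx⟩ := (Matrix.exists_mulVec_eq_zero_iff).2 hdet
  have key : ∀ u : V, (G.degree u : ℝ) * x u + ∑ v ∈ G.neighborFinset u, x v = μ * x u := by
    intro u
    have h1 := congrFun hx u
    rw [Matrix.sub_mulVec] at h1
    simp only [Pi.sub_apply, Pi.zero_apply, SimpleGraph.signlessLap, Matrix.add_mulVec,
      Pi.add_apply, SimpleGraph.degMatrix_mulVec_apply, SimpleGraph.adjMatrix_mulVec_apply,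
      Matrix.algebraMap_eq_diagonal, Matrix.mulVec_diagonal, Pi.algebraMap_apply,
      Algebra.algebraMap_self, RingHom.id_apply] at h1
    linarith
  -- some vertex of positive degree has a nonzero coordinate
  have hsupp : ∃ v : V, x v ≠ 0 ∧ 0 < G.degree v := by
    by_contra h
    push_neg at h
    obtain ⟨v0, hv0⟩ := Function.ne_iff.1 hx0
    have hd0 : G.degree v0 = 0 := Nat.le_zero.mp (h v0 hv0)
    have hnb : G.neighborFinset v0 = ∅ := Finset.card_eq_zero.1 hd0
    have := key v0
    rw [hd0, hnb] at this
    simp at this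
    rcases this with h' | h'
    · exact hμ0.ne' h'
    · exact hv0 h'
  -- neighbors have positive degree
  have hnd : ∀ u v : V, v ∈ G.neighborFinset u → 0 < G.degree v := by
    intro u v hv
    rw [SimpleGraph.mem_neighborFinset] at hv
    exact (G.degree_pos_iff_exists_adj v).2 ⟨u, hv.symm⟩
  -- the scaled vector
  set z : V → ℝ := fun v => x v / (G.degree v : ℝ) with hz
  set S : Finset V := Finset.univ.filter (fun v => 0 < G.degree v) with hS
  have hSne : S.Nonempty := ⟨a, by simp [hS, ha]⟩
  obtain ⟨u, huS, hmax⟩ := S.exists_max_image (fun v => |z v|) hSne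
  have hud : 0 < G.degree u := by simpa [hS] using huS
  have hudR : (0:ℝ) < (G.degree u : ℝ) := by exact_mod_cast hud
  have hzu : 0 < |z u| := by
    obtain ⟨w, hw, hwd⟩ := hsupp
    have hwS : w ∈ S := by simp [hS, hwd]
    have : 0 < |z w| := by
      have hwdR : (0:ℝ) < (G.degree w : ℝ) := by exact_mod_cast hwd
      have : z w ≠ 0 := div_ne_zero hw hwdR.ne'
      exact abs_pos.2 this
    exact lt_of_lt_of_le this (hmax w hwS)
  -- rewrite the eigen-equation at u in terms of z
  have hx_eq : ∀ v : V, 0 < G.degree v → x v = (G.degree v : ℝ) * z v := by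
    intro v hv
    have hvR : (0:ℝ) < (G.degree v : ℝ) := by exact_mod_cast hv
    simp only [hz]
    field_simp
  have keyu : μ * ((G.degree u : ℝ) * z u) =
      (G.degree u : ℝ) * ((G.degree u : ℝ) * z u) +
        ∑ v ∈ G.neighborFinset u, (G.degree v : ℝ) * z v := by
    have := key u
    rw [hx_eq u hud] at this
    rw [Finset.sum_congr rfl (fun v hv => hx_eq v (hnd u v hv))] at this
    linarith
  -- take absolute values
  have habs : μ * ((G.degree u : ℝ) * |z u|) ≤
      ((G.degree u : ℝ) * (G.degree u : ℝ) +
        ∑ v ∈ G.neighborFinset u, (G.degree v : ℝ)) * |z u| := by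
    have h1 : μ * ((G.degree u : ℝ) * |z u|) = |μ * ((G.degree u : ℝ) * z u)| := by
      rw [abs_mul, abs_mul, abs_of_pos hμ0, abs_of_pos hudR]
    rw [h1, keyu]
    calc |(G.degree u : ℝ) * ((G.degree u : ℝ) * z u) +
        ∑ v ∈ G.neighborFinset u, (G.degree v : ℝ) * z v|
        ≤ |(G.degree u : ℝ) * ((G.degree u : ℝ) * z u)| +
          ∑ v ∈ G.neighborFinset u, |(G.degree v : ℝ) * z v| :=
          (abs_add_le _ _).trans (by gcongr; exact Finset.abs_sum_le_sum_abs _ _)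
      _ ≤ (G.degree u : ℝ) * ((G.degree u : ℝ) * |z u|) +
          ∑ v ∈ G.neighborFinset u, (G.degree v : ℝ) * |z u| := by
          refine add_le_add (le_of_eq ?_) (Finset.sum_le_sum fun v hv => ?_)
          · rw [abs_mul, abs_mul, abs_of_pos hudR]
          · have hvd := hnd u v hv
            have hvdR : (0:ℝ) ≤ (G.degree v : ℝ) := Nat.cast_nonneg _
            have hle : |z v| ≤ |z u| := hmax v (by simp [hS, hvd])
            calc |(G.degree v : ℝ) * z v| = (G.degree v : ℝ) * |z v| := by
                  rw [abs_mul, abs_of_nonneg hvdR]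
              _ ≤ (G.degree v : ℝ) * |z u| := by gcongr
      _ = ((G.degree u : ℝ) * (G.degree u : ℝ) +
          ∑ v ∈ G.neighborFinset u, (G.degree v : ℝ)) * |z u| := by
          rw [add_mul, Finset.sum_mul, ← mul_assoc]
  refine ⟨u, hud, ?_⟩
  have hpos : 0 < (G.degree u : ℝ) * |z u| := mul_pos hudR hzu
  refine le_of_mul_le_mul_right ?_ hpos
  calc μ * ((G.degree u : ℝ) * |z u|) ≤
        ((G.degree u : ℝ) * (G.degree u : ℝ) +
          ∑ v ∈ G.neighborFinset u, (G.degree v : ℝ)) * |z u| := habs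
      _ = ((G.degree u : ℝ) +
          (1 / (G.degree u : ℝ)) * ∑ v ∈ G.neighborFinset u, (G.degree v : ℝ)) *
          ((G.degree u : ℝ) * |z u|) := by
          field_simp
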